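/- Let H₁ = [[f₁,u₁],[g₁,v₁]] and H₂ = [[f₂,u₂],[g₂,v₂]] with all entries in L^∞, and suppose there is a nonzero constant λ such that conj(f₁) − conj(λ)·conj(u₁), g₁ − λv₁, g₂ − λf₂, and conj(v₂) − conj(λ)·conj(u₂) all lie in H^∞. Then, with respect to the decomposition L² = H² ⊕ z̄·conj(H²), the product R_{H₁}R_{H₂} equals the operator matrix [[T_{f₁f₂}, H*_{(1/conj(λ))·conj(f₁)·conj(v₂)}],[H_{λv₁f₂}, T̃_{v₁v₂}]]; in particular R_{H₁}R_{H₂} is the generalized Cauchy singular integral operator with symbol [[f₁f₂, (1/λ)f₁v₂],[λv₁f₂, v₁v₂]]. -/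

import Mathlib

noncomputable section

open MeasureTheory Complex ComplexConjugate InnerProductSpace ContinuousLinearMap

namespace GSIO

instance : Fact (0 < 2 * Real.pi) := ⟨by positivity⟩

/-- The circle, modeled as `ℝ / 2πℤ`. -/
abbrev Circ : Type := AddCircle (2 * Real.pi)

/-- Normalized Haar (arc-length) measure on the circle. -/
abbrev μC : Measure Circ := AddCircle.haarAddCircle

/-- `L²` of the circle. -/
abbrev L2 : Type := Lp ℂ 2 μC

/-- `L^∞` of the circle. -/
abbrev Linf : Type := Lp ℂ ⊤ μC

/-- The Hardy space `H²`: those `L²` functions whose negative Fourier coefficients vanish. -/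
def Hardy : Submodule ℂ L2 where
  carrier := {f : L2 | ∀ n : ℤ, n < 0 → fourierCoeff (f : Circ → ℂ) n = 0}
  zero_mem' := by
    intro n hn
    rw [← fourierBasis_repr]
    simp
  add_mem' := by
    intro a b ha hb n hn
    have ha' := ha n hn
    have hb' := hb n hn
    rw [← fourierBasis_repr] at ha' hb' ⊢
    rw [map_add, lp.coeFn_add, Pi.add_apply, ha', hb', add_zero]
  smul_mem' := by
    intro c a ha n hn
    have ha' := ha n hn
    rw [← fourierBasis_repr] at ha' ⊢
    rw [_root_.map_smul, lp.coeFn_smul, Pi.smul_apply, ha', smul_zero]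

theorem isClosed_Hardy : IsClosed (Hardy : Set L2) := by
  have h : (Hardy : Set L2) =
      ⋂ n : {m : ℤ // m < 0}, (fun f : L2 =>
        (innerSL ℂ (fourierBasis (T := 2 * Real.pi) n.1)) f) ⁻¹' {0} := by
    ext f
    simp only [Set.mem_iInter, Set.mem_preimage, Set.mem_singleton_iff, SetLike.mem_coe]
    constructor
    · intro hf n
      have h1 := hf n.1 n.2
      rw [← fourierBasis_repr, fourierBasis.repr_apply_apply] at h1
      simpa using h1
    · intro hf n hn
      have h1 := hf ⟨n, hn⟩
      rw [← fourierBasis_repr, fourierBasis.repr_apply_apply]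
      simpa using h1
  rw [h]
  exact isClosed_iInter fun n =>
    isClosed_singleton.preimage (innerSL ℂ _).continuous

instance : CompleteSpace Hardy := isClosed_Hardy.completeSpace_coe

/-- The Riesz projection `P₊`, i.e. the orthogonal projection of `L²` onto `H²`. -/
def Pp : L2 →L[ℂ] L2 := Hardy.subtypeL.comp (Hardy.orthogonalProjectionOnto)

/-- `P₋ = I − P₊`. -/
def Pm : L2 →L[ℂ] L2 := ContinuousLinearMap.id ℂ L2 - Pp

/-- The pointwise product of an `L^∞` function with an `L²` function, as an `L²` function. -/
def mulFun (φ : Linf) (x : L2) : L2 :=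
  ((Lp.memLp x).smul (r := 2) (Lp.memLp φ)).toLp ((φ : Circ → ℂ) • (x : Circ → ℂ))

theorem mulFun_add (φ : Linf) (x y : L2) : mulFun φ (x + y) = mulFun φ x + mulFun φ y := by
  rw [mulFun, mulFun, mulFun, ← MemLp.toLp_add]
  apply MemLp.toLp_congr
  filter_upwards [Lp.coeFn_add x y] with t ht
  have ht' : ((x + y : L2) : Circ → ℂ) t = (x : Circ → ℂ) t + (y : Circ → ℂ) t := by
    simpa using ht
  simp only [Pi.mul_apply, Pi.smul_apply, Pi.add_apply, smul_eq_mul, ht']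
  ring

theorem mulFun_smul (c : ℂ) (φ : Linf) (x : L2) : mulFun φ (c • x) = c • mulFun φ x := by
  rw [mulFun, mulFun, ← MemLp.toLp_const_smul]
  apply MemLp.toLp_congr
  filter_upwards [Lp.coeFn_smul c x] with t ht
  have ht' : ((c • x : L2) : Circ → ℂ) t = c * (x : Circ → ℂ) t := by
    simpa using ht
  simp only [Pi.mul_apply, Pi.smul_apply, smul_eq_mul, ht']
  ring

theorem norm_mulFun_le (φ : Linf) (x : L2) : ‖mulFun φ x‖ ≤ ‖φ‖ * ‖x‖ := by
  rw [mulFun, Lp.norm_toLp]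
  have h := eLpNorm_smul_le_eLpNorm_top_mul_eLpNorm (μ := μC) 2
    (Lp.aestronglyMeasurable x) (φ : Circ → ℂ)
  refine le_trans (ENNReal.toReal_mono ?_ h) ?_
  · exact ENNReal.mul_ne_top (Lp.eLpNorm_ne_top φ) (Lp.eLpNorm_ne_top x)
  · rw [ENNReal.toReal_mul, Lp.norm_def, Lp.norm_def]

/-- The multiplication operator `M_φ` on `L²`, for `φ ∈ L^∞`. -/
def mul (φ : Linf) : L2 →L[ℂ] L2 :=
  LinearMap.mkContinuous
    { toFun := mulFun φ
      map_add' := mulFun_add φ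
      map_smul' := fun c x => mulFun_smul c φ x }
    ‖φ‖ (fun x => norm_mulFun_le φ x)

/-- Pointwise product in `L^∞`. -/
def mulInf (φ ψ : Linf) : Linf :=
  ((Lp.memLp ψ).smul (r := ⊤) (Lp.memLp φ)).toLp ((φ : Circ → ℂ) • (ψ : Circ → ℂ))

/-- Complex conjugation on `L^∞`. -/
def conjInf (φ : Linf) : Linf :=
  (show MemLp (fun t => star ((φ : Circ → ℂ) t)) ⊤ μC from
    ⟨continuous_star.comp_aestronglyMeasurable (Lp.aestronglyMeasurable φ), by
      rw [eLpNorm_congr_norm_ae (g := (φ : Circ → ℂ))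
        (Filter.Eventually.of_forall fun t => norm_star _)]
      exact Lp.eLpNorm_lt_top φ⟩).toLp _

/-- Complex conjugation on `L²`. -/
def conjL2 (x : L2) : L2 :=
  (show MemLp (fun t => star ((x : Circ → ℂ) t)) 2 μC from
    ⟨continuous_star.comp_aestronglyMeasurable (Lp.aestronglyMeasurable x), by
      rw [eLpNorm_congr_norm_ae (g := (x : Circ → ℂ))
        (Filter.Eventually.of_forall fun t => norm_star _)]
      exact Lp.eLpNorm_lt_top x⟩).toLp _

/-- The inclusion `L^∞ ⊆ L²` (the measure is finite). -/
def toL2 (φ : Linf) : L2 := ((Lp.memLp φ).mono_exponent le_top).toLp φ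

/-- The constant function `c` as an element of `L^∞`. -/
def constInf (c : ℂ) : Linf := (memLp_const c).toLp (fun _ => c)

/-- An `L^∞` function is constant (a.e.). -/
def IsConst (φ : Linf) : Prop := ∃ c : ℂ, φ = constInf c

/-- `φ ∈ H^∞ = L^∞ ∩ H²`: the negative Fourier coefficients of `φ` vanish. -/
def MemHinf (φ : Linf) : Prop := ∀ n : ℤ, n < 0 → fourierCoeff (φ : Circ → ℂ) n = 0

/-- The coordinate function `z` as an element of `L^∞`. -/
def zInf : Linf := fourierLp (T := 2 * Real.pi) ⊤ 1

/-- The function `z̄` as an element of `L^∞`. -/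
def zbarInf : Linf := fourierLp (T := 2 * Real.pi) ⊤ (-1)

/-- The antiunitary operator `V : h ↦ z̄ ⬝ conj h` on `L²`. -/
def Vmap (x : L2) : L2 := mul zbarInf (conjL2 x)

/-- `φ₋ = P₋ φ` for `φ ∈ L^∞`, viewed inside `L²`. -/
def mI (φ : Linf) : L2 := Pm (toL2 φ)

/-- The rank-one operator `p ⊗ q : x ↦ ⟪x, q⟫ · p` (the inner product being conjugate-linear
in `q`). -/
def rankOne {E : Type*} [NormedAddCommGroup E] [InnerProductSpace ℂ E] (p q : E) : E →L[ℂ] E :=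
  (innerSL ℂ q).smulRight p

/-- The Hilbert space direct sum `L² ⊕ L²`. -/
abbrev L2sq : Type := WithLp 2 (L2 × L2)

/-- A pair of `L²` functions, viewed as a vector in `L² ⊕ L²`. -/
def pair (x y : L2) : L2sq := (WithLp.equiv 2 (L2 × L2)).symm (x, y)

/-- Notation for the pointwise product in `L^∞`. -/
scoped infixl:70 " ⊙ " => GSIO.mulInf

/-- The Toeplitz operator `T_φ = P₊ M_φ P₊` (viewed as acting on the corner `H²` of `L²`). -/
def Toeplitz (φ : Linf) : L2 →L[ℂ] L2 := Pp ∘L mul φ ∘L Pp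

/-- The Hankel operator `H_φ = P₋ M_φ P₊ : H² → (H²)^⊥` (as a corner operator on `L²`). -/
def Hankel (φ : Linf) : L2 →L[ℂ] L2 := Pm ∘L mul φ ∘L Pp

/-- The dual Toeplitz operator `T̃_φ = P₋ M_φ P₋` on `(H²)^⊥` (as a corner operator on `L²`). -/
def dualToeplitz (φ : Linf) : L2 →L[ℂ] L2 := Pm ∘L mul φ ∘L Pm

/-- The generalized Cauchy singular integral operator with symbol `[[f, u], [g, v]]`:
`R x = P₊ f P₊ x + P₋ g P₊ x + P₊ u P₋ x + P₋ v P₋ x`. -/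
def Rop (f u g v : Linf) : L2 →L[ℂ] L2 :=
  Pp ∘L mul f ∘L Pp + Pm ∘L mul g ∘L Pp + Pp ∘L mul u ∘L Pm + Pm ∘L mul v ∘L Pm

/-- The singular integral operator `S_{f,g} = M_f P₊ + M_g P₋` on `L²`. -/
def Sop (f g : Linf) : L2 →L[ℂ] L2 := mul f ∘L Pp + mul g ∘L Pm



/-- Negation `t ↦ -t` preserves the Haar measure of the circle. -/
theorem mp_neg : MeasurePreserving (fun t : Circ => -t) μC μC :=
  Measure.measurePreserving_neg μC

/-- Composition with `t ↦ -t` on `L²`. -/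
def reflL2 : L2 →L[ℂ] L2 :=
  (Lp.compMeasurePreservingₗᵢ ℂ (fun t : Circ => -t) mp_neg).toContinuousLinearMap

/-- Composition with `t ↦ -t` on `L^∞`: for `φ ∈ L^∞`, `φ̃(z) = φ(z̄)`. -/
def reflInf (φ : Linf) : Linf := Lp.compMeasurePreserving (fun t : Circ => -t) mp_neg φ

/-- `φ* (z) = conj (φ(z̄))`. -/
def starInf (φ : Linf) : Linf := conjInf (reflInf φ)

/-- The flip operator `J : (Jh)(z) = z̄ · h(z̄)` on `L²`. -/
def Jop : L2 →L[ℂ] L2 := mul zbarInf ∘L reflL2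

/-- The Hankel operator `𝕳_φ = P₊ M_φ J` on `H²` (as a corner operator on `L²`). -/
def HankelPlus (φ : Linf) : L2 →L[ℂ] L2 := Pp ∘L mul φ ∘L Jop ∘L Pp

/-- The adjoint `H*_φ` of the Hankel operator `H_φ`. -/
def HankelAdj (φ : Linf) : L2 →L[ℂ] L2 := ContinuousLinearMap.adjoint (Hankel φ)

/-- `θ ∈ L^∞` is an inner function: `θ ∈ H^∞` and `|θ| = 1` a.e. -/
def IsInner (θ : Linf) : Prop := MemHinf θ ∧ ∀ᵐ t ∂μC, ‖(θ : Circ → ℂ) t‖ = 1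

/-- The orthogonal projection of `L²` onto `K_θ^⊥ = θH² ⊕ z̄·conj(H²)`, namely
`P₋ + M_θ P₊ M_{conj θ}`. -/
def Qproj (θ : Linf) : L2 →L[ℂ] L2 := Pm + mul θ ∘L Pp ∘L mul (conjInf θ)

section Lemmas

theorem mul_coeFn (φ : Linf) (x : L2) :
    (mul φ x : Circ → ℂ) =ᵐ[μC] fun t => (φ : Circ → ℂ) t * (x : Circ → ℂ) t := by
  have h : mul φ x = ((Lp.memLp x).smul (r := 2) (Lp.memLp φ)).toLp
      ((φ : Circ → ℂ) • (x : Circ → ℂ)) := rfl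
  rw [h]
  exact (MemLp.coeFn_toLp _).trans (Filter.Eventually.of_forall fun t => rfl)

theorem mulInf_coeFn (φ ψ : Linf) :
    ((φ ⊙ ψ : Linf) : Circ → ℂ) =ᵐ[μC] fun t => (φ : Circ → ℂ) t * (ψ : Circ → ℂ) t := by
  have h : (φ ⊙ ψ) = ((Lp.memLp ψ).smul (r := ⊤) (Lp.memLp φ)).toLp
      ((φ : Circ → ℂ) • (ψ : Circ → ℂ)) := rfl
  rw [h]
  exact (MemLp.coeFn_toLp _).trans (Filter.Eventually.of_forall fun t => rfl)

theorem conjInf_coeFn (φ : Linf) :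
    ((conjInf φ : Linf) : Circ → ℂ) =ᵐ[μC] fun t => star ((φ : Circ → ℂ) t) :=
  MemLp.coeFn_toLp _

theorem conjInf_conjInf (φ : Linf) : conjInf (conjInf φ) = φ := by
  apply Lp.ext
  filter_upwards [conjInf_coeFn (conjInf φ), conjInf_coeFn φ] with t h1 h2
  rw [h1, h2, star_star]

theorem conjInf_smul (c : ℂ) (φ : Linf) : conjInf (c • φ) = star c • conjInf φ := by
  apply Lp.ext
  filter_upwards [conjInf_coeFn (c • φ), conjInf_coeFn φ, Lp.coeFn_smul c φ,
    Lp.coeFn_smul (star c) (conjInf φ)] with t h1 h2 h3 h4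
  rw [h1, h3, h4, Pi.smul_apply, Pi.smul_apply, h2, smul_eq_mul, smul_eq_mul, star_mul']

theorem conjInf_sub (φ ψ : Linf) : conjInf (φ - ψ) = conjInf φ - conjInf ψ := by
  apply Lp.ext
  filter_upwards [conjInf_coeFn (φ - ψ), conjInf_coeFn φ, conjInf_coeFn ψ, Lp.coeFn_sub φ ψ,
    Lp.coeFn_sub (conjInf φ) (conjInf ψ)] with t h1 h2 h3 h4 h5
  rw [h1, h4, h5, Pi.sub_apply, Pi.sub_apply, h2, h3, star_sub]

theorem mul_mulInf (φ ψ : Linf) : mul (φ ⊙ ψ) = mul φ ∘L mul ψ := by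
  refine ContinuousLinearMap.ext fun x => Lp.ext ?_
  filter_upwards [mul_coeFn (φ ⊙ ψ) x, mul_coeFn φ (mul ψ x), mul_coeFn ψ x,
    mulInf_coeFn φ ψ] with t h1 h2 h3 h4
  simp only [ContinuousLinearMap.comp_apply, h1, h2, h3, h4]
  ring

theorem mul_smul_symbol (c : ℂ) (φ : Linf) : mul (c • φ) = c • mul φ := by
  refine ContinuousLinearMap.ext fun x => Lp.ext ?_
  filter_upwards [mul_coeFn (c • φ) x, mul_coeFn φ x, Lp.coeFn_smul c φ,
    Lp.coeFn_smul c (mul φ x)] with t h1 h2 h3 h4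
  simp only [ContinuousLinearMap.smul_apply, h1, h3, h4, Pi.smul_apply, h2, smul_eq_mul]
  ring

theorem mul_sub_symbol (φ ψ : Linf) : mul (φ - ψ) = mul φ - mul ψ := by
  refine ContinuousLinearMap.ext fun x => Lp.ext ?_
  filter_upwards [mul_coeFn (φ - ψ) x, mul_coeFn φ x, mul_coeFn ψ x, Lp.coeFn_sub φ ψ,
    Lp.coeFn_sub (mul φ x) (mul ψ x)] with t h1 h2 h3 h4 h5
  simp only [ContinuousLinearMap.sub_apply, h1, h4, h5, Pi.sub_apply, h2, h3]
  ring

theorem Pp_comp_Pp : Pp ∘L Pp = Pp := by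
  refine ContinuousLinearMap.ext fun x => ?_
  simp only [ContinuousLinearMap.comp_apply, Pp, Submodule.subtypeL_apply,
    Submodule.orthogonalProjectionOnto_mem_subspace_eq_self]

theorem Pp_comp_Pm : Pp ∘L Pm = 0 := by
  rw [Pm, ContinuousLinearMap.comp_sub, Pp_comp_Pp, ContinuousLinearMap.comp_id, sub_self]

theorem Pm_comp_Pp : Pm ∘L Pp = 0 := by
  rw [Pm, ContinuousLinearMap.sub_comp, Pp_comp_Pp, ContinuousLinearMap.id_comp, sub_self]

theorem Pm_comp_Pm : Pm ∘L Pm = Pm := by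
  rw [Pm, ContinuousLinearMap.sub_comp, ContinuousLinearMap.id_comp,
    ContinuousLinearMap.comp_sub, ContinuousLinearMap.comp_id, Pp_comp_Pp]
  abel

theorem Pp_add_Pm : Pp + Pm = ContinuousLinearMap.id ℂ L2 := by
  rw [Pm]; abel

end Lemmas
section Lemmas2

theorem fourierCoeff_congr_ae {f g : Circ → ℂ} (h : f =ᵐ[μC] g) (n : ℤ) :
    fourierCoeff f n = fourierCoeff g n := by
  unfold fourierCoeff
  refine integral_congr_ae ?_
  filter_upwards [h] with t ht
  rw [ht]

theorem fourierCoeff_mul_fourier (φ : Linf) (m n : ℤ) :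
    fourierCoeff ((mul φ (fourierLp 2 m) : L2) : Circ → ℂ) n
      = fourierCoeff (φ : Circ → ℂ) (n - m) := by
  have h1 : ((mul φ (fourierLp 2 m) : L2) : Circ → ℂ)
      =ᵐ[μC] fun t => (φ : Circ → ℂ) t * fourier m t := by
    filter_upwards [mul_coeFn φ (fourierLp 2 m), coeFn_fourierLp 2 m] with t h h'
    rw [h, h']
  rw [fourierCoeff_congr_ae h1]
  unfold fourierCoeff
  refine integral_congr_ae (Filter.Eventually.of_forall fun t => ?_)
  show (fourier (-n)) t • ((φ : Circ → ℂ) t * (fourier m) t)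
      = (fourier (-(n - m))) t • (φ : Circ → ℂ) t
  have h : -(n - m) = -n + m := by ring
  rw [h, fourier_add]
  simp only [smul_eq_mul]
  ring

theorem memHardy_mul (φ : Linf) (hφ : MemHinf φ) {x : L2} (hx : x ∈ Hardy) :
    mul φ x ∈ Hardy := by
  intro n hn
  have hsum := (fourierBasis (T := 2 * Real.pi)).hasSum_repr x
  have h2 := hsum.mapL ((innerSL ℂ (fourierBasis (T := 2 * Real.pi) n)).comp (mul φ))
  have hz : ∀ i : ℤ, ((innerSL ℂ (fourierBasis (T := 2 * Real.pi) n)).comp (mul φ))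
      ((fourierBasis.repr x i) • fourierBasis (T := 2 * Real.pi) i) = 0 := by
    intro i
    rcases lt_or_ge i 0 with hi | hi
    · have : fourierBasis.repr x i = 0 := by
        rw [fourierBasis_repr]; exact hx i hi
      rw [this, zero_smul, map_zero]
    · rw [_root_.map_smul]
      have h3 : (innerSL ℂ (fourierBasis (T := 2 * Real.pi) n)) (mul φ (fourierBasis i))
          = fourierCoeff ((mul φ (fourierBasis i) : L2) : Circ → ℂ) n := by
        rw [← fourierBasis_repr, fourierBasis.repr_apply_apply]
        rfl
      simp only [ContinuousLinearMap.comp_apply, h3]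
      have h4 : (fourierBasis (T := 2 * Real.pi) i : L2) = fourierLp 2 i := by
        rw [← coe_fourierBasis]
      beta_reduce at h4
      rw [h4, fourierCoeff_mul_fourier, hφ (n - i) (by omega), smul_zero]
  have h5 : HasSum (fun _ : ℤ => (0 : ℂ))
      (((innerSL ℂ (fourierBasis (T := 2 * Real.pi) n)).comp (mul φ)) x) := by
    refine HasSum.congr_fun h2 fun i => (hz i).symm
  have h6 := h5.unique hasSum_zero
  rw [← fourierBasis_repr, fourierBasis.repr_apply_apply]
  exact h6

theorem Pp_eq_self_of_mem {y : L2} (hy : y ∈ Hardy) : Pp y = y := by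
  simpa [Pp] using Submodule.starProjection_eq_self_iff.mpr hy

theorem Pp_apply_mem (x : L2) : Pp x ∈ Hardy := by
  simp only [Pp, ContinuousLinearMap.comp_apply, Submodule.subtypeL_apply]
  exact SetLike.coe_mem _

theorem Pm_mul_Pp_eq_zero (φ : Linf) (hφ : MemHinf φ) : Pm ∘L mul φ ∘L Pp = 0 := by
  refine ContinuousLinearMap.ext fun x => ?_
  have h1 : mul φ (Pp x) ∈ Hardy := memHardy_mul φ hφ (Pp_apply_mem x)
  simp only [ContinuousLinearMap.comp_apply, ContinuousLinearMap.zero_apply, Pm,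
    ContinuousLinearMap.sub_apply, ContinuousLinearMap.id_apply]
  rw [Pp_eq_self_of_mem h1, sub_self]

end Lemmas2
section Lemmas3

theorem mul_adjoint (φ : Linf) : ContinuousLinearMap.adjoint (mul φ) = mul (conjInf φ) := by
  symm
  rw [ContinuousLinearMap.eq_adjoint_iff]
  intro x y
  rw [MeasureTheory.L2.inner_def, MeasureTheory.L2.inner_def]
  refine integral_congr_ae ?_
  filter_upwards [mul_coeFn (conjInf φ) x, mul_coeFn φ y, conjInf_coeFn φ] with t h1 h2 h3
  simp only [h1, h2, h3, RCLike.inner_apply, starRingEnd_apply, star_mul', star_star]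
  ring

theorem Pp_adjoint : ContinuousLinearMap.adjoint Pp = Pp :=
  (isSelfAdjoint_starProjection Hardy).adjoint_eq

theorem Pm_adjoint : ContinuousLinearMap.adjoint Pm = Pm := by
  rw [Pm, map_sub, Pp_adjoint, ContinuousLinearMap.adjoint_id]

theorem Pp_mul_Pm_eq_zero (φ : Linf) (hφ : MemHinf (conjInf φ)) : Pp ∘L mul φ ∘L Pm = 0 := by
  have h := Pm_mul_Pp_eq_zero (conjInf φ) hφ
  have h2 := congrArg ContinuousLinearMap.adjoint h
  rw [ContinuousLinearMap.adjoint_comp, ContinuousLinearMap.adjoint_comp, Pp_adjoint,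
    Pm_adjoint, mul_adjoint, conjInf_conjInf, map_zero] at h2
  rw [← h2, ContinuousLinearMap.comp_assoc]

theorem HankelAdj_eq (ψ : Linf) : HankelAdj ψ = Pp ∘L mul (conjInf ψ) ∘L Pm := by
  rw [HankelAdj, Hankel, ContinuousLinearMap.adjoint_comp, ContinuousLinearMap.adjoint_comp,
    Pp_adjoint, Pm_adjoint, mul_adjoint, ContinuousLinearMap.comp_assoc]

end Lemmas3
section Lemmas4

theorem conjInf_mulInf (φ ψ : Linf) : conjInf (φ ⊙ ψ) = conjInf φ ⊙ conjInf ψ := by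
  apply Lp.ext
  filter_upwards [conjInf_coeFn (φ ⊙ ψ), mulInf_coeFn φ ψ,
    mulInf_coeFn (conjInf φ) (conjInf ψ), conjInf_coeFn φ, conjInf_coeFn ψ] with t h1 h2 h3 h4 h5
  rw [h1, h2, h3, h4, h5, star_mul']

theorem tailRel {lam : ℂ} (g f : Linf) (h : MemHinf (g - lam • f)) :
    Pm ∘L (mul g ∘L Pp) = lam • (Pm ∘L (mul f ∘L Pp)) := by
  have h0 := Pm_mul_Pp_eq_zero (g - lam • f) h
  rw [mul_sub_symbol, mul_smul_symbol, ContinuousLinearMap.sub_comp,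
    ContinuousLinearMap.smul_comp, ContinuousLinearMap.comp_sub,
    ContinuousLinearMap.comp_smul, sub_eq_zero] at h0
  exact h0

theorem headRel {lam : ℂ} (f u : Linf) (h : MemHinf (conjInf f - conj lam • conjInf u)) :
    Pp ∘L (mul f ∘L Pm) = lam • (Pp ∘L (mul u ∘L Pm)) := by
  have hc : MemHinf (conjInf (f - lam • u)) := by
    rw [conjInf_sub, conjInf_smul]
    exact h
  have h0 := Pp_mul_Pm_eq_zero (f - lam • u) hc
  rw [mul_sub_symbol, mul_smul_symbol, ContinuousLinearMap.sub_comp,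
    ContinuousLinearMap.smul_comp, ContinuousLinearMap.comp_sub,
    ContinuousLinearMap.comp_smul, sub_eq_zero] at h0
  exact h0

end Lemmas4
section Lemmas5

theorem hsplit' (X : L2 →L[ℂ] L2) : X = Pp ∘L X + Pm ∘L X := by
  rw [← ContinuousLinearMap.add_comp, Pp_add_Pm, ContinuousLinearMap.id_comp]

theorem headRelInv {lam : ℂ} (hlam : lam ≠ 0) (f u : Linf)
    (h : MemHinf (conjInf f - conj lam • conjInf u)) :
    Pp ∘L (mul u ∘L Pm) = lam⁻¹ • (Pp ∘L (mul f ∘L Pm)) := by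
  rw [headRel f u h, smul_smul, inv_mul_cancel₀ hlam, one_smul]

theorem ringKey {A : Type*} [Ring A] [Algebra ℂ A] (lam : ℂ) (hlam : lam ≠ 0)
    (P Q F₁ U₁ G₁ V₁ F₂ U₂ G₂ V₂ : A)
    (hPQ : P + Q = 1) (hPP : P * P = P) (hPM : P * Q = 0) (hMP : Q * P = 0) (hMM : Q * Q = Q)
    (r1 : P * (F₁ * Q) = lam • (P * (U₁ * Q))) (r2 : Q * (G₁ * P) = lam • (Q * (V₁ * P)))
    (r3 : Q * (G₂ * P) = lam • (Q * (F₂ * P))) (r4 : P * (V₂ * Q) = lam • (P * (U₂ * Q))) :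
    (P * (F₁ * P) + Q * (G₁ * P) + P * (U₁ * Q) + Q * (V₁ * Q)) *
        (P * (F₂ * P) + Q * (G₂ * P) + P * (U₂ * Q) + Q * (V₂ * Q)) =
      P * (F₁ * (F₂ * P)) + lam⁻¹ • (P * (F₁ * (V₂ * Q)))
        + lam • (Q * (V₁ * (F₂ * P))) + Q * (V₁ * (V₂ * Q)) := by
  have hPP' : ∀ X : A, P * (P * X) = P * X := fun X => by rw [← mul_assoc, hPP]
  have hPM' : ∀ X : A, P * (Q * X) = 0 := fun X => by rw [← mul_assoc, hPM, zero_mul]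
  have hMP' : ∀ X : A, Q * (P * X) = 0 := fun X => by rw [← mul_assoc, hMP, zero_mul]
  have hMM' : ∀ X : A, Q * (Q * X) = Q * X := fun X => by rw [← mul_assoc, hMM]
  have hsplit : ∀ X : A, X = P * X + Q * X := fun X => by
    rw [← add_mul, hPQ, one_mul]
  have r3' : Q * (G₂ * P) = lam • (Q * (F₂ * P)) := r3
  have r4' : P * (U₂ * Q) = lam⁻¹ • (P * (V₂ * Q)) := by
    rw [r4, smul_smul, inv_mul_cancel₀ hlam, one_smul]
  have r2' : ∀ X : A, Q * (G₁ * (P * X)) = lam • (Q * (V₁ * (P * X))) := fun X => by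
    have h := congrArg (· * X) r2
    simpa only [mul_assoc, smul_mul_assoc] using h
  have r1' : ∀ X : A, P * (U₁ * (Q * X)) = lam⁻¹ • (P * (F₁ * (Q * X))) := fun X => by
    have h0 : P * (U₁ * Q) = lam⁻¹ • (P * (F₁ * Q)) := by
      rw [r1, smul_smul, inv_mul_cancel₀ hlam, one_smul]
    have h := congrArg (· * X) h0
    simpa only [mul_assoc, smul_mul_assoc] using h
  conv_rhs => rw [hsplit (F₂ * P), hsplit (V₂ * Q)]
  simp only [mul_add, add_mul, mul_assoc, hPP', hPM', hMP', hMM', mul_zero, zero_mul,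
    add_zero, zero_add, r3', r4', r2', r1', mul_smul_comm, smul_mul_assoc, smul_smul,
    mul_inv_cancel₀ hlam, inv_mul_cancel₀ hlam, one_smul, smul_add]
  abel

set_option maxHeartbeats 800000 in
theorem key5 (lam : ℂ) (hlam : lam ≠ 0) (f₁ u₁ g₁ v₁ f₂ u₂ g₂ v₂ : Linf)
    (h1 : MemHinf (conjInf f₁ - conj lam • conjInf u₁))
    (h2 : MemHinf (g₁ - lam • v₁)) (h3 : MemHinf (g₂ - lam • f₂))
    (h4 : MemHinf (conjInf v₂ - conj lam • conjInf u₂)) :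
    Rop f₁ u₁ g₁ v₁ ∘L Rop f₂ u₂ g₂ v₂ =
      Pp ∘L (mul f₁ ∘L (mul f₂ ∘L Pp)) + lam⁻¹ • (Pp ∘L (mul f₁ ∘L (mul v₂ ∘L Pm)))
        + lam • (Pm ∘L (mul v₁ ∘L (mul f₂ ∘L Pp))) + Pm ∘L (mul v₁ ∘L (mul v₂ ∘L Pm)) := by
  have habs := ringKey lam hlam Pp Pm (mul f₁) (mul u₁) (mul g₁) (mul v₁)
      (mul f₂) (mul u₂) (mul g₂) (mul v₂) Pp_add_Pm Pp_comp_Pp Pp_comp_Pm Pm_comp_Pp Pm_comp_Pm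
      (headRel f₁ u₁ h1) (tailRel g₁ v₁ h2) (tailRel g₂ f₂ h3) (headRel v₂ u₂ h4)
  simp only [Rop]
  simp only [ContinuousLinearMap.mul_def] at habs
  exact habs

end Lemmas5
section Lemmas6

theorem eToeplitz (f₁ f₂ : Linf) : Toeplitz (f₁ ⊙ f₂) = Pp ∘L (mul f₁ ∘L (mul f₂ ∘L Pp)) := by
  rw [Toeplitz, mul_mulInf, ContinuousLinearMap.comp_assoc]

theorem eHankelAdj (lam : ℂ) (f₁ v₂ : Linf) :
    HankelAdj ((conj lam)⁻¹ • (conjInf f₁ ⊙ conjInf v₂)) =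
      lam⁻¹ • (Pp ∘L (mul f₁ ∘L (mul v₂ ∘L Pm))) := by
  rw [HankelAdj_eq, conjInf_smul, conjInf_mulInf, conjInf_conjInf, conjInf_conjInf,
    mul_smul_symbol, mul_mulInf]
  have hc : star ((conj lam)⁻¹) = lam⁻¹ := by
    simp only [starRingEnd_apply, star_inv₀, star_star]
  rw [hc, ContinuousLinearMap.smul_comp, ContinuousLinearMap.comp_smul,
    ContinuousLinearMap.comp_assoc]

theorem eHankel (lam : ℂ) (v₁ f₂ : Linf) :
    Hankel (lam • (v₁ ⊙ f₂)) = lam • (Pm ∘L (mul v₁ ∘L (mul f₂ ∘L Pp))) := by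
  rw [Hankel, mul_smul_symbol, mul_mulInf, ContinuousLinearMap.smul_comp,
    ContinuousLinearMap.comp_smul, ContinuousLinearMap.comp_assoc]

theorem eDualToeplitz (v₁ v₂ : Linf) :
    dualToeplitz (v₁ ⊙ v₂) = Pm ∘L (mul v₁ ∘L (mul v₂ ∘L Pm)) := by
  rw [dualToeplitz, mul_mulInf, ContinuousLinearMap.comp_assoc]

theorem eRop (lam : ℂ) (f₁ v₁ f₂ v₂ : Linf) :
    Rop (f₁ ⊙ f₂) (lam⁻¹ • (f₁ ⊙ v₂)) (lam • (v₁ ⊙ f₂)) (v₁ ⊙ v₂) =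
      Pp ∘L (mul f₁ ∘L (mul f₂ ∘L Pp)) + lam⁻¹ • (Pp ∘L (mul f₁ ∘L (mul v₂ ∘L Pm)))
        + lam • (Pm ∘L (mul v₁ ∘L (mul f₂ ∘L Pp))) + Pm ∘L (mul v₁ ∘L (mul v₂ ∘L Pm)) := by
  rw [Rop]
  simp only [mul_mulInf, mul_smul_symbol, ContinuousLinearMap.smul_comp,
    ContinuousLinearMap.comp_smul, ContinuousLinearMap.comp_assoc]
  abel

end Lemmas6
/-- If there is `λ ≠ 0` with `f̄₁ − λ̄ū₁, g₁ − λv₁, g₂ − λf₂, v̄₂ − λ̄ū₂ ∈ H^∞`,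
then `R_{H₁}R_{H₂}` equals the operator matrix
`[[T_{f₁f₂}, H*_{(1/λ̄)f̄₁v̄₂}],[H_{λv₁f₂}, T̃_{v₁v₂}]]`; in particular it is the GSIO with
symbol `[[f₁f₂, (1/λ)f₁v₂],[λv₁f₂, v₁v₂]]`. -/
theorem statement5 (lam : ℂ) (hlam : lam ≠ 0) (f₁ u₁ g₁ v₁ f₂ u₂ g₂ v₂ : Linf)
    (h1 : MemHinf (conjInf f₁ - conj lam • conjInf u₁))
    (h2 : MemHinf (g₁ - lam • v₁)) (h3 : MemHinf (g₂ - lam • f₂))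
    (h4 : MemHinf (conjInf v₂ - conj lam • conjInf u₂)) :
    Rop f₁ u₁ g₁ v₁ ∘L Rop f₂ u₂ g₂ v₂ =
        Toeplitz (f₁ ⊙ f₂) + HankelAdj ((conj lam)⁻¹ • (conjInf f₁ ⊙ conjInf v₂)) +
          Hankel (lam • (v₁ ⊙ f₂)) + dualToeplitz (v₁ ⊙ v₂) ∧
      Rop f₁ u₁ g₁ v₁ ∘L Rop f₂ u₂ g₂ v₂ =
        Rop (f₁ ⊙ f₂) (lam⁻¹ • (f₁ ⊙ v₂)) (lam • (v₁ ⊙ f₂)) (v₁ ⊙ v₂) := by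
  have key := key5 lam hlam f₁ u₁ g₁ v₁ f₂ u₂ g₂ v₂ h1 h2 h3 h4
  constructor
  · rw [key, eToeplitz, eHankelAdj, eHankel, eDualToeplitz]
  · rw [key, eRop]

end GSIO
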